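/- Let c, r, η be positive real numbers with −1/2 < c − r < −η < 1 + η < c, 0 < η ≤ 1/2 and r > 2c − 1, and let J_2 be a positive integer. Then, with σ = c + r·cos θ, ∫_{θ_{−η}}^{π} log ζ(1 − σ) dθ ≤ ((log ζ(1+η) + log ζ(c))/2)·(θ_{1−c} − θ_{−η}) + ((π − θ_{1−c})/(2J_2))·log ζ(c) + κ_3(J_2), where κ_3(J_2) = ((π − θ_{1−c})/(2J_2))·( log ζ(1−c+r) + 2·Σ_{j=1}^{J_2−1} log ζ( 1 − c − r·cos( πj/J_2 + (1 − j/J_2)·θ_{1−c} ) ) ). -/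

import Mathlib

open Complex

/-- `θ_y`: `0` if `c + r ≤ y`; `arccos((y-c)/r)` if `c - r ≤ y ≤ c + r`; `π` if `y ≤ c - r`. -/
noncomputable def thetaY (c r y : ℝ) : ℝ :=
  if c + r ≤ y then 0
  else if c - r ≤ y then Real.arccos ((y - c) / r)
  else Real.pi

/-- `κ₃(J₂) = ((π - θ_{1-c})/(2J₂))(log ζ(1-c+r)
  + 2 ∑_{j=1}^{J₂-1} log ζ(1 - c - r cos(πj/J₂ + (1 - j/J₂)θ_{1-c})))`. -/
noncomputable def kappa3 (c r : ℝ) (J₂ : ℕ) : ℝ :=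
  (Real.pi - thetaY c r (1 - c)) / (2 * J₂)
    * (Real.log ‖riemannZeta ((1 - c + r : ℝ) : ℂ)‖
      + 2 * ∑ j ∈ Finset.Icc 1 (J₂ - 1),
          Real.log ‖riemannZeta
            ((1 - c - r * Real.cos (Real.pi * j / J₂
              + (1 - (j : ℝ) / J₂) * thetaY c r (1 - c)) : ℝ) : ℂ)‖)



noncomputable def Zr (s : ℝ) : ℝ := ∑' n : ℕ, 1 / ((n : ℝ) + 1) ^ s

lemma Zr_summable {s : ℝ} (hs : 1 < s) :
    Summable (fun n : ℕ => 1 / ((n : ℝ) + 1) ^ s) := by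
  have h := (Real.summable_one_div_nat_rpow (p := s)).2 hs
  have := (_root_.summable_nat_add_iff (f := fun n : ℕ => 1 / (n : ℝ) ^ s) 1).2 h
  simpa using this

lemma Zr_pos {s : ℝ} (hs : 1 < s) : 0 < Zr s := by
  refine Summable.tsum_pos (Zr_summable hs) (fun n => by positivity) 0 (by norm_num)

lemma norm_zeta_eq {s : ℝ} (hs : 1 < s) : ‖riemannZeta (s : ℂ)‖ = Zr s := by
  have h : riemannZeta (s : ℂ) = ∑' n : ℕ, 1 / ((n : ℂ) + 1) ^ (s : ℂ) := by
    have := zeta_eq_tsum_one_div_nat_add_one_cpow (s := (s : ℂ)) (by simpa using hs)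
    simpa using this
  have h2 : (∑' n : ℕ, 1 / ((n : ℂ) + 1) ^ (s : ℂ)) = ((Zr s : ℝ) : ℂ) := by
    rw [Zr, ofReal_tsum]
    congr 1
    funext n
    have hn : (0 : ℝ) ≤ (n : ℝ) + 1 := by positivity
    rw [ofReal_div, Complex.ofReal_cpow hn]
    push_cast
    ring_nf
  rw [h, h2, Complex.norm_real, Real.norm_eq_abs, abs_of_pos (Zr_pos hs)]

lemma Zr_holder {x y a b : ℝ} (hx : 1 < x) (hy : 1 < y) (ha : 0 < a) (hb : 0 < b)
    (hab : a + b = 1) : Zr (a * x + b * y) ≤ Zr x ^ a * Zr y ^ b := by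
  have ha1 : a < 1 := by linarith
  have hpq : Real.HolderConjugate (1 / a) (1 / b) := by
    rw [Real.holderConjugate_iff]; constructor
    · rw [lt_div_iff₀ ha]; linarith
    · rw [one_div, one_div, inv_inv, inv_inv]; exact hab
  have hfp : ∀ n : ℕ, ((1 / ((n : ℝ) + 1) ^ x) ^ a) ^ (1 / a) = 1 / ((n : ℝ) + 1) ^ x := by
    intro n
    have h0 : (0 : ℝ) ≤ 1 / ((n : ℝ) + 1) ^ x := by positivity
    rw [← Real.rpow_mul h0, mul_one_div_cancel ha.ne', Real.rpow_one]
  have hgq : ∀ n : ℕ, ((1 / ((n : ℝ) + 1) ^ y) ^ b) ^ (1 / b) = 1 / ((n : ℝ) + 1) ^ y := by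
    intro n
    have h0 : (0 : ℝ) ≤ 1 / ((n : ℝ) + 1) ^ y := by positivity
    rw [← Real.rpow_mul h0, mul_one_div_cancel hb.ne', Real.rpow_one]
  have key : ∀ n : ℕ, 1 / ((n : ℝ) + 1) ^ (a * x + b * y)
      = (1 / ((n : ℝ) + 1) ^ x) ^ a * (1 / ((n : ℝ) + 1) ^ y) ^ b := by
    intro n
    have ht : (0 : ℝ) < (n : ℝ) + 1 := by positivity
    rw [one_div, one_div, one_div, ← Real.rpow_neg ht.le, ← Real.rpow_neg ht.le,
      ← Real.rpow_neg ht.le, ← Real.rpow_mul ht.le, ← Real.rpow_mul ht.le,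
      ← Real.rpow_add ht]
    ring_nf
  have hsum1 : Summable fun n : ℕ => ((1 / ((n : ℝ) + 1) ^ x) ^ a) ^ (1 / a) := by
    simpa only [hfp] using Zr_summable hx
  have hsum2 : Summable fun n : ℕ => ((1 / ((n : ℝ) + 1) ^ y) ^ b) ^ (1 / b) := by
    simpa only [hgq] using Zr_summable hy
  have H := Real.inner_le_Lp_mul_Lq_tsum_of_nonneg hpq
    (f := fun n : ℕ => (1 / ((n : ℝ) + 1) ^ x) ^ a)
    (g := fun n : ℕ => (1 / ((n : ℝ) + 1) ^ y) ^ b)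
    (fun n => by positivity) (fun n => by positivity) hsum1 hsum2
  rw [one_div_one_div, one_div_one_div] at H
  calc Zr (a * x + b * y) = ∑' n : ℕ, (1 / ((n : ℝ) + 1) ^ x) ^ a * (1 / ((n : ℝ) + 1) ^ y) ^ b := by
        rw [Zr]; exact tsum_congr key
    _ ≤ (∑' n : ℕ, ((1 / ((n : ℝ) + 1) ^ x) ^ a) ^ (1 / a)) ^ a
        * (∑' n : ℕ, ((1 / ((n : ℝ) + 1) ^ y) ^ b) ^ (1 / b)) ^ b := H
    _ = Zr x ^ a * Zr y ^ b := by
        rw [tsum_congr hfp, tsum_congr hgq]; rfl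

lemma logZr_convexOn : ConvexOn ℝ (Set.Ioi 1) (fun s => Real.log (Zr s)) := by
  refine ⟨convex_Ioi 1, ?_⟩
  intro x hx y hy a b ha hb hab
  simp only [smul_eq_mul]
  rcases eq_or_lt_of_le ha with h | h
  · subst h; simp only [zero_mul, zero_add] at *
    rw [(by linarith : b = 1)]; simp
  rcases eq_or_lt_of_le hb with h' | h'
  · rw [← h'] at hab ⊢; simp only [zero_mul, add_zero] at *
    rw [(by linarith : a = 1)]; simp
  have hx1 : (1 : ℝ) < x := hx
  have hy1 : (1 : ℝ) < y := hy
  have hcomb : 1 < a * x + b * y := by nlinarith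
  have := Zr_holder hx1 hy1 h h' hab
  calc Real.log (Zr (a * x + b * y)) ≤ Real.log (Zr x ^ a * Zr y ^ b) :=
        Real.log_le_log (Zr_pos hcomb) this
    _ = a * Real.log (Zr x) + b * Real.log (Zr y) := by
        rw [Real.log_mul (Real.rpow_pos_of_pos (Zr_pos hx1) a).ne' (Real.rpow_pos_of_pos (Zr_pos hy1) b).ne', Real.log_rpow (Zr_pos hx1),
          Real.log_rpow (Zr_pos hy1)]

lemma logZr_anti {x y : ℝ} (hx : 1 < x) (hxy : x ≤ y) :
    Real.log (Zr y) ≤ Real.log (Zr x) := by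
  have hy : 1 < y := lt_of_lt_of_le hx hxy
  refine Real.log_le_log (Zr_pos hy) ?_
  refine Summable.tsum_le_tsum (fun n => ?_) (Zr_summable hy) (Zr_summable hx)
  have h1 : (1 : ℝ) ≤ (n : ℝ) + 1 := le_add_of_nonneg_left (Nat.cast_nonneg n)
  exact one_div_le_one_div_of_le (Real.rpow_pos_of_pos (by positivity : (0:ℝ) < (n:ℝ)+1) x)
    (Real.rpow_le_rpow_of_exponent_le h1 hxy)

lemma cos_convexOn : ConvexOn ℝ (Set.Icc (Real.pi / 2) Real.pi) Real.cos := by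
  refine ⟨convex_Icc _ _, ?_⟩
  intro x hx y hy a b ha hb hab
  simp only [smul_eq_mul]
  have hx' : x - Real.pi / 2 ∈ Set.Icc (0 : ℝ) Real.pi :=
    ⟨by linarith [hx.1], by linarith [hx.2, Real.pi_pos]⟩
  have hy' : y - Real.pi / 2 ∈ Set.Icc (0 : ℝ) Real.pi :=
    ⟨by linarith [hy.1], by linarith [hy.2, Real.pi_pos]⟩
  have hs := strictConcaveOn_sin_Icc.concaveOn.2 hx' hy' ha hb hab
  simp only [smul_eq_mul] at hs
  have e1 : ∀ t : ℝ, Real.cos t = -Real.sin (t - Real.pi / 2) := by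
    intro t
    rw [← Real.sin_pi_div_two_sub t, ← Real.sin_neg]
    ring_nf
  rw [e1 x, e1 y, e1 (a * x + b * y)]
  have e2 : a * x + b * y - Real.pi / 2 = a * (x - Real.pi / 2) + b * (y - Real.pi / 2) := by
    have : a * (Real.pi / 2) + b * (Real.pi / 2) = Real.pi / 2 := by
      rw [← add_mul, hab, one_mul]
    ring_nf
    linarith [this]
  rw [e2]
  linarith [hs]

lemma trapezoid {f : ℝ → ℝ} {a b : ℝ} (hab : a ≤ b) (hf : ConvexOn ℝ (Set.Icc a b) f)
    (hint : IntervalIntegrable f MeasureTheory.volume a b) :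
    ∫ x in a..b, f x ≤ (f a + f b) / 2 * (b - a) := by
  rcases eq_or_lt_of_le hab with rfl | hlt
  · simp
  have hba : b - a ≠ 0 := by linarith
  set m : ℝ := (f b - f a) / (b - a) with hm
  have hpt : ∀ x ∈ Set.Icc a b, f x ≤ (f a - a * m) + m * x := by
    intro x hx
    set t : ℝ := (x - a) / (b - a) with htd
    have ht0 : 0 ≤ t := div_nonneg (by linarith [hx.1]) (by linarith)
    have ht1 : t ≤ 1 := (div_le_one (by linarith)).2 (by linarith [hx.2])
    have hxe : x = (1 - t) * a + t * b := by
      have htb : t * (b - a) = x - a := by rw [htd]; exact div_mul_cancel₀ _ hba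
      linear_combination -htb
    have := hf.2 (Set.left_mem_Icc.2 hab) (Set.right_mem_Icc.2 hab)
      (by linarith : (0:ℝ) ≤ 1 - t) ht0 (by ring)
    simp only [smul_eq_mul] at this
    rw [← hxe] at this
    have heq : (1 - t) * f a + t * f b = (f a - a * m) + m * x := by
      rw [htd, hm]
      field_simp
      ring
    linarith [this]
  have hcont : IntervalIntegrable (fun x => (f a - a * m) + m * x) MeasureTheory.volume a b :=
    (continuous_const.add (continuous_const.mul continuous_id)).intervalIntegrable a b
  have hmono := intervalIntegral.integral_mono_on hab hint hcont hpt
  have hcalc : (∫ x in a..b, ((f a - a * m) + m * x)) = (f a + f b) / 2 * (b - a) := by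
    have h2 : IntervalIntegrable (fun x : ℝ => m * x) MeasureTheory.volume a b :=
      (by continuity : Continuous fun x : ℝ => m * x).intervalIntegrable a b
    rw [intervalIntegral.integral_add intervalIntegrable_const h2]
    simp only [intervalIntegral.integral_const, smul_eq_mul]
    rw [intervalIntegral.integral_const_mul]
    rw [integral_id]
    rw [hm]
    field_simp
    ring
  linarith [hmono, hcalc.le]

lemma sum_pair (g : ℕ → ℝ) : ∀ n : ℕ, 1 ≤ n →
    ∑ j ∈ Finset.range n, (g j + g (j + 1))
      = g 0 + g n + 2 * ∑ j ∈ Finset.Icc 1 (n - 1), g j := by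
  intro n
  induction n with
  | zero => intro h; omega
  | succ k ih =>
    intro _
    rcases Nat.eq_or_lt_of_le (Nat.one_le_iff_ne_zero.2 (by omega) : 1 ≤ k + 1) with h1 | h1
    · -- k = 0
      have hk : k = 0 := by omega
      subst hk
      simp
    · have hk1 : 1 ≤ k := by omega
      rw [Finset.sum_range_succ, ih hk1]
      have hks : k - 1 + 1 = k := by omega
      have hstep := Finset.sum_Icc_succ_top (a := 1) (b := k - 1) (by omega) g
      rw [hks] at hstep
      have h2 : k + 1 - 1 = k := by omega
      rw [h2, hstep]
      ring

lemma G_convexOn {c r A : ℝ} (hA : Real.pi / 2 ≤ A) (hr : 0 < r)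
    (hlow : ∀ θ ∈ Set.Icc A Real.pi, 1 < 1 - c - r * Real.cos θ) :
    ConvexOn ℝ (Set.Icc A Real.pi)
      (fun θ => Real.log ‖riemannZeta ((1 - c - r * Real.cos θ : ℝ) : ℂ)‖) := by
  refine ⟨convex_Icc _ _, ?_⟩
  intro x hx y hy a b ha hb hab
  simp only [smul_eq_mul]
  have hw : a * x + b * y ∈ Set.Icc A Real.pi := by
    have := (convex_Icc A Real.pi) hx hy ha hb hab
    simpa using this
  set u : ℝ := 1 - c - r * Real.cos x with hu
  set v : ℝ := 1 - c - r * Real.cos y with hv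
  set w : ℝ := 1 - c - r * Real.cos (a * x + b * y) with hwdef
  have hu1 : 1 < u := hlow x hx
  have hv1 : 1 < v := hlow y hy
  have hw1 : 1 < w := hlow _ hw
  have hcos : Real.cos (a * x + b * y) ≤ a * Real.cos x + b * Real.cos y := by
    have hx2 : x ∈ Set.Icc (Real.pi / 2) Real.pi := ⟨le_trans hA hx.1, hx.2⟩
    have hy2 : y ∈ Set.Icc (Real.pi / 2) Real.pi := ⟨le_trans hA hy.1, hy.2⟩
    have := cos_convexOn.2 hx2 hy2 ha hb hab
    simpa using this
  have hcomb : a * u + b * v ≤ w := by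
    have h2 : r * Real.cos (a * x + b * y) ≤ r * (a * Real.cos x + b * Real.cos y) :=
      mul_le_mul_of_nonneg_left hcos hr.le
    have e : a * u + b * v = 1 - c - r * (a * Real.cos x + b * Real.cos y) := by
      rw [hu, hv]
      linear_combination (1 - c) * hab
    rw [e, hwdef]
    linarith
  have hcomb1 : 1 < a * u + b * v := by
    rcases eq_or_lt_of_le ha with h | h
    · rw [← h] at hab ⊢
      simp only [zero_mul, zero_add] at *
      nlinarith
    · nlinarith [mul_nonneg hb (by linarith : (0:ℝ) ≤ v - 1), mul_pos h (by linarith : (0:ℝ) < u - 1)]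
  rw [norm_zeta_eq hu1, norm_zeta_eq hv1, norm_zeta_eq hw1]
  calc Real.log (Zr w) ≤ Real.log (Zr (a * u + b * v)) := logZr_anti hcomb1 hcomb
    _ ≤ a * Real.log (Zr u) + b * Real.log (Zr v) := by
        have := logZr_convexOn.2 (Set.mem_Ioi.2 hu1) (Set.mem_Ioi.2 hv1) ha hb hab
        simpa using this

lemma G_contOn {c r A : ℝ}
    (hlow : ∀ θ ∈ Set.Icc A Real.pi, 1 < 1 - c - r * Real.cos θ) :
    ContinuousOn (fun θ => Real.log ‖riemannZeta ((1 - c - r * Real.cos θ : ℝ) : ℂ)‖)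
      (Set.Icc A Real.pi) := by
  intro θ hθ
  apply ContinuousAt.continuousWithinAt
  have h1 : 1 < 1 - c - r * Real.cos θ := hlow θ hθ
  have hz : ((1 - c - r * Real.cos θ : ℝ) : ℂ) ≠ 1 := by
    rw [Ne, Complex.ofReal_eq_one]
    linarith
  have hc1 : ContinuousAt (fun t : ℝ => ((1 - c - r * Real.cos t : ℝ) : ℂ)) θ :=
    (Complex.continuous_ofReal.comp (by continuity)).continuousAt
  have hc2 : ContinuousAt (fun t : ℝ => riemannZeta ((1 - c - r * Real.cos t : ℝ) : ℂ)) θ :=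
    ContinuousAt.comp (g := riemannZeta) ((differentiableAt_riemannZeta hz).continuousAt) hc1
  have hc3 : ContinuousAt (fun t : ℝ => ‖riemannZeta ((1 - c - r * Real.cos t : ℝ) : ℂ)‖) θ :=
    hc2.norm
  refine (Real.continuousAt_log ?_).comp hc3
  rw [norm_zeta_eq h1]
  exact (Zr_pos h1).ne'

/-- **Lemma 3.14, second bound.** Assuming further `r > 2c - 1`, for `σ = c + r cos θ`,
`∫_{θ_{-η}}^{π} log ζ(1-σ) dθ ≤ ((log ζ(1+η) + log ζ(c))/2)(θ_{1-c} - θ_{-η})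
  + ((π - θ_{1-c})/(2J₂)) log ζ(c) + κ₃(J₂)`. -/
theorem zeta_integral_bound_second (c r η : ℝ) (hc : 0 < c) (hr : 0 < r) (hη₀ : 0 < η)
    (h₁ : -(1 / 2) < c - r) (h₂ : c - r < -η) (h₃ : 1 + η < c) (hη₁ : η ≤ 1 / 2)
    (hr' : r > 2 * c - 1)
    (J₂ : ℕ) (hJ₂ : 0 < J₂) :
    (∫ θ in (thetaY c r (-η))..Real.pi,
        Real.log ‖riemannZeta ((1 - (c + r * Real.cos θ) : ℝ) : ℂ)‖)
      ≤ (Real.log ‖riemannZeta ((1 + η : ℝ) : ℂ)‖ + Real.log ‖riemannZeta ((c : ℝ) : ℂ)‖) / 2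
          * (thetaY c r (1 - c) - thetaY c r (-η))
        + (Real.pi - thetaY c r (1 - c)) / (2 * J₂) * Real.log ‖riemannZeta ((c : ℝ) : ℂ)‖
        + kappa3 c r J₂ := by
  have hπ := Real.pi_pos
  have hJ : (0 : ℝ) < (J₂ : ℝ) := by exact_mod_cast hJ₂
  have hJne : (J₂ : ℝ) ≠ 0 := hJ.ne'
  have hc1 : 1 < c := by linarith
  have ha_def : thetaY c r (-η) = Real.arccos ((-η - c) / r) := by
    rw [thetaY, if_neg (by push_neg; linarith), if_pos (by linarith)]
  have hb_def : thetaY c r (1 - c) = Real.arccos ((1 - c - c) / r) := by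
    rw [thetaY, if_neg (by push_neg; linarith), if_pos (by linarith)]
  set a := thetaY c r (-η) with haset
  set b := thetaY c r (1 - c) with hbset
  have hq1l : -1 ≤ (-η - c) / r := (le_div_iff₀ hr).2 (by linarith)
  have hq1r : (-η - c) / r ≤ 1 := (div_le_one hr).2 (by linarith)
  have hq1n : (-η - c) / r ≤ 0 := (div_le_iff₀ hr).2 (by linarith)
  have hq2l : -1 ≤ (1 - c - c) / r := (le_div_iff₀ hr).2 (by linarith)
  have hq2r : (1 - c - c) / r ≤ 1 := (div_le_one hr).2 (by linarith)
  have hq21 : (1 - c - c) / r ≤ (-η - c) / r := by gcongr; linarith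
  have hab : a ≤ b := by
    rw [ha_def, hb_def, Real.arccos, Real.arccos]
    have := Real.monotone_arcsin hq21
    linarith
  have haπ2 : Real.pi / 2 ≤ a := by
    rw [ha_def, Real.arccos]
    have := Real.arcsin_nonpos.2 hq1n
    linarith
  have haπ : a ≤ Real.pi := by rw [ha_def]; exact Real.arccos_le_pi _
  have hbπ : b ≤ Real.pi := by rw [hb_def]; exact Real.arccos_le_pi _
  have hcosa : Real.cos a = (-η - c) / r := by rw [ha_def]; exact Real.cos_arccos hq1l hq1r
  have hcosb : Real.cos b = (1 - c - c) / r := by rw [hb_def]; exact Real.cos_arccos hq2l hq2r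
  have hrq1 : r * ((-η - c) / r) = -η - c := by field_simp
  have hrq2 : r * ((1 - c - c) / r) = 1 - c - c := by field_simp
  have hsa : 1 - c - r * Real.cos a = 1 + η := by rw [hcosa, hrq1]; ring
  have hsb : 1 - c - r * Real.cos b = c := by rw [hcosb, hrq2]; ring
  have hsπ : 1 - c - r * Real.cos Real.pi = 1 - c + r := by rw [Real.cos_pi]; ring
  have hlow : ∀ θ ∈ Set.Icc a Real.pi, 1 < 1 - c - r * Real.cos θ := by
    intro θ hθ
    have h1 : Real.cos θ ≤ Real.cos a :=
      Real.cos_le_cos_of_nonneg_of_le_pi (by linarith) hθ.2 hθ.1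
    have h2 := mul_le_mul_of_nonneg_left h1 hr.le
    rw [hcosa, hrq1] at h2
    linarith
  set G : ℝ → ℝ := fun θ => Real.log ‖riemannZeta ((1 - c - r * Real.cos θ : ℝ) : ℂ)‖
    with hGdef
  have hconv : ConvexOn ℝ (Set.Icc a Real.pi) G := G_convexOn haπ2 hr hlow
  have hcont : ContinuousOn G (Set.Icc a Real.pi) := G_contOn hlow
  have hint : ∀ u v : ℝ, a ≤ u → u ≤ v → v ≤ Real.pi →
      IntervalIntegrable G MeasureTheory.volume u v := by
    intro u v hyp1 hyp2 hyp3
    apply ContinuousOn.intervalIntegrable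
    apply hcont.mono
    rw [Set.uIcc_of_le hyp2]
    exact Set.Icc_subset_Icc hyp1 hyp3
  have hinteq : (∫ θ in a..Real.pi,
      Real.log ‖riemannZeta ((1 - (c + r * Real.cos θ) : ℝ) : ℂ)‖) = ∫ θ in a..Real.pi, G θ := by
    apply intervalIntegral.integral_congr
    intro θ _
    simp only [hGdef]
    rw [sub_add_eq_sub_sub]
  rw [hinteq]
  have hsplit : (∫ θ in a..Real.pi, G θ) = (∫ θ in a..b, G θ) + ∫ θ in b..Real.pi, G θ :=
    (intervalIntegral.integral_add_adjacent_intervals (hint a b le_rfl hab hbπ)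
      (hint b Real.pi hab hbπ le_rfl)).symm
  rw [hsplit]
  have ht1 : (∫ θ in a..b, G θ) ≤ (G a + G b) / 2 * (b - a) :=
    trapezoid hab (hconv.subset (Set.Icc_subset_Icc le_rfl hbπ) (convex_Icc _ _))
      (hint a b le_rfl hab hbπ)
  set h : ℝ := (Real.pi - b) / J₂ with hh
  have hh0 : 0 ≤ h := div_nonneg (by linarith) hJ.le
  set x : ℕ → ℝ := fun j => b + j * h with hx
  have hx0 : x 0 = b := by simp [hx]
  have hJh : (J₂ : ℝ) * h = Real.pi - b := by rw [hh]; field_simp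
  have hxJ : x J₂ = Real.pi := by simp only [hx]; rw [hJh]; ring
  have hxstep : ∀ j : ℕ, x (j + 1) - x j = h := by
    intro j; simp only [hx]; push_cast; ring
  have hxmem : ∀ j : ℕ, j ≤ J₂ → b ≤ x j ∧ x j ≤ Real.pi := by
    intro j hj
    have h0 : 0 ≤ (j : ℝ) * h := mul_nonneg (Nat.cast_nonneg j) hh0
    have hjr : (j : ℝ) ≤ (J₂ : ℝ) := by exact_mod_cast hj
    have h1 : (j : ℝ) * h ≤ (J₂ : ℝ) * h := mul_le_mul_of_nonneg_right hjr hh0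
    constructor
    · simp only [hx]; linarith
    · simp only [hx]; linarith [hJh]
  have hint2 : ∀ j : ℕ, j < J₂ → IntervalIntegrable G MeasureTheory.volume (x j) (x (j + 1)) := by
    intro j hj
    have hle : x j ≤ x (j + 1) := by have := hxstep j; linarith
    exact hint _ _ (le_trans hab (hxmem j hj.le).1) hle (hxmem (j + 1) hj).2
  have hsum : ∑ j ∈ Finset.range J₂, ∫ θ in (x j)..(x (j + 1)), G θ
      = ∫ θ in (x 0)..(x J₂), G θ :=
    intervalIntegral.sum_integral_adjacent_intervals hint2
  rw [hx0, hxJ] at hsum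
  have htraps : ∀ j : ℕ, j < J₂ →
      (∫ θ in (x j)..(x (j + 1)), G θ) ≤ h / 2 * (G (x j) + G (x (j + 1))) := by
    intro j hj
    have hle : x j ≤ x (j + 1) := by have := hxstep j; linarith
    have hT := trapezoid hle
      (hconv.subset (Set.Icc_subset_Icc (le_trans hab (hxmem j hj.le).1) (hxmem (j + 1) hj).2)
        (convex_Icc _ _)) (hint2 j hj)
    rw [hxstep j] at hT
    linarith
  have ht2 : (∫ θ in b..Real.pi, G θ)
      ≤ h / 2 * (G b + G Real.pi + 2 * ∑ j ∈ Finset.Icc 1 (J₂ - 1), G (x j)) := by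
    rw [← hsum]
    calc ∑ j ∈ Finset.range J₂, ∫ θ in (x j)..(x (j + 1)), G θ
        ≤ ∑ j ∈ Finset.range J₂, h / 2 * (G (x j) + G (x (j + 1))) :=
          Finset.sum_le_sum fun j hj => htraps j (Finset.mem_range.1 hj)
      _ = h / 2 * ∑ j ∈ Finset.range J₂, (G (x j) + G (x (j + 1))) := by
          rw [Finset.mul_sum]
      _ = h / 2 * (G (x 0) + G (x J₂) + 2 * ∑ j ∈ Finset.Icc 1 (J₂ - 1), G (x j)) := by
          rw [sum_pair (fun j => G (x j)) J₂ hJ₂]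
      _ = _ := by rw [hx0, hxJ]
  have hGa : G a = Real.log ‖riemannZeta ((1 + η : ℝ) : ℂ)‖ := by
    simp only [hGdef]; rw [hsa]
  have hGb : G b = Real.log ‖riemannZeta ((c : ℝ) : ℂ)‖ := by
    simp only [hGdef]; rw [hsb]
  have hGπ : G Real.pi = Real.log ‖riemannZeta ((1 - c + r : ℝ) : ℂ)‖ := by
    simp only [hGdef]; rw [hsπ]
  have hS : ∑ j ∈ Finset.Icc 1 (J₂ - 1), G (x j)
      = ∑ j ∈ Finset.Icc 1 (J₂ - 1), Real.log ‖riemannZeta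
          ((1 - c - r * Real.cos (Real.pi * j / J₂ + (1 - (j : ℝ) / J₂) * b) : ℝ) : ℂ)‖ := by
    refine Finset.sum_congr rfl fun j _ => ?_
    have hxj : x j = Real.pi * j / J₂ + (1 - (j : ℝ) / J₂) * b := by
      simp only [hx, hh]; field_simp; ring
    simp only [hGdef]; rw [hxj]
  have hh2 : h / 2 = (Real.pi - b) / (2 * (J₂ : ℝ)) := by
    rw [hh, div_div]; ring_nf
  have hk : kappa3 c r J₂ = h / 2 * (Real.log ‖riemannZeta ((1 - c + r : ℝ) : ℂ)‖
      + 2 * ∑ j ∈ Finset.Icc 1 (J₂ - 1), Real.log ‖riemannZeta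
          ((1 - c - r * Real.cos (Real.pi * j / J₂ + (1 - (j : ℝ) / J₂) * b) : ℝ) : ℂ)‖) := by
    rw [kappa3, ← hbset, hh2]
  rw [hGa] at ht1
  rw [hGb] at ht1
  rw [hGb, hGπ, hS] at ht2
  rw [hk, ← hh2]
  have expand : h / 2 * (Real.log ‖riemannZeta ((c : ℝ) : ℂ)‖
        + Real.log ‖riemannZeta ((1 - c + r : ℝ) : ℂ)‖
        + 2 * ∑ j ∈ Finset.Icc 1 (J₂ - 1), Real.log ‖riemannZeta
            ((1 - c - r * Real.cos (Real.pi * j / J₂ + (1 - (j : ℝ) / J₂) * b) : ℝ) : ℂ)‖)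
      = h / 2 * Real.log ‖riemannZeta ((c : ℝ) : ℂ)‖
        + h / 2 * (Real.log ‖riemannZeta ((1 - c + r : ℝ) : ℂ)‖
          + 2 * ∑ j ∈ Finset.Icc 1 (J₂ - 1), Real.log ‖riemannZeta
              ((1 - c - r * Real.cos (Real.pi * j / J₂ + (1 - (j : ℝ) / J₂) * b) : ℝ) : ℂ)‖) := by
    ring
  linarith [ht1, ht2, expand]
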